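/- Let (X, w) be a tight Euclidean 2e-design on p concentric spheres in ℝⁿ. Then the weight function w is constant on each layer X_i, for 1 ≤ i ≤ p. -/

import Mathlib

open MeasureTheory Metric Finset
open scoped Classical RealInnerProductSpace

noncomputable section

/-- Euclidean `n`-space `ℝⁿ`. -/
abbrev Euc (n : ℕ) := EuclideanSpace ℝ (Fin n)

/-- Evaluation of a multivariate polynomial at a point of `ℝⁿ`. -/
def evalPt {n : ℕ} (x : Euc n) (p : MvPolynomial (Fin n) ℝ) : ℝ :=
  MvPolynomial.eval (fun i => x i) p

/-- The normalized average (with respect to the `O(n)`-invariant surface measure,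
i.e. the `(n-1)`-dimensional Hausdorff measure) of `f` over the sphere of radius `r`
centered at the origin; for `r = 0` it is `f 0`. -/
def sphAvg (n : ℕ) (r : ℝ) (f : Euc n → ℝ) : ℝ :=
  if r = 0 then f 0
  else ⨍ y in Metric.sphere (0 : Euc n) r, f y ∂(μH[(n : ℝ) - 1])

/-- `(X, w)` is a Euclidean `t`-design in `ℝⁿ`:
`∑ᵢ (w(Xᵢ)/|Sᵢ|) ∫_{Sᵢ} f dσᵢ = ∑_{x ∈ X} w(x) f(x)` for all polynomials `f` of
degree at most `t`, where the `Sᵢ` are the concentric spheres supporting `X`. -/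
def IsEuclideanDesign (n t : ℕ) (X : Finset (Euc n)) (w : Euc n → ℝ) : Prop :=
  ∀ p : MvPolynomial (Fin n) ℝ, p.totalDegree ≤ t →
    ∑ r ∈ X.image (fun x => ‖x‖),
        (∑ x ∈ X.filter (fun x => ‖x‖ = r), w x) * sphAvg n r (fun y => evalPt y p)
      = ∑ x ∈ X, w x * evalPt x p

/-- Restriction of polynomials to a subset `S ⊆ ℝⁿ`, as a linear map. -/
def polyRestrict (n : ℕ) (S : Set (Euc n)) :
    MvPolynomial (Fin n) ℝ →ₗ[ℝ] (S → ℝ) where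
  toFun p := fun x => evalPt (x : Euc n) p
  map_add' p q := by funext x; simp [evalPt]
  map_smul' c p := by funext x; simp [evalPt, MvPolynomial.smul_eval]

/-- `Pol_e(S)`: the space of restrictions to `S` of polynomials of total degree at most `e`. -/
def PolOn (n e : ℕ) (S : Set (Euc n)) : Submodule ℝ (S → ℝ) :=
  (MvPolynomial.restrictTotalDegree (Fin n) ℝ e).map (polyRestrict n S)

/-- `dim Pol_e(S)`. -/
def dimPolOn (n e : ℕ) (S : Set (Euc n)) : ℕ := Module.finrank ℝ (PolOn n e S)

/-- The union of the concentric spheres (centered at the origin) supporting `X`. -/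
def suppSpheres (n : ℕ) (X : Finset (Euc n)) : Set (Euc n) :=
  ⋃ r ∈ X.image (fun x => ‖x‖), Metric.sphere (0 : Euc n) r

/-- `(X, w)` is a tight Euclidean `2e`-design on `S` (the union of the concentric
spheres supporting `X`): it is a Euclidean `2e`-design with `|X| = dim Pol_e(S)`. -/
def IsTightOnS (n e : ℕ) (X : Finset (Euc n)) (w : Euc n → ℝ) : Prop :=
  IsEuclideanDesign n (2 * e) X w ∧ X.card = dimPolOn n e (suppSpheres n X)

/-- `(X, w)` is a tight Euclidean `2e`-design: tight on `S` and moreover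
`dim Pol_e(S) = dim Pol_e(ℝⁿ) = C(n+e, e)`. -/
def IsTightDesign (n e : ℕ) (X : Finset (Euc n)) (w : Euc n → ℝ) : Prop :=
  IsTightOnS n e X w ∧ dimPolOn n e (suppSpheres n X) = (n + e).choose e

/-- append a last coordinate -/
def snocE {m : ℕ} (u : Euc m) (a : ℝ) : Euc (m + 1) := WithLp.toLp 2 (Fin.snoc (α := fun _ => ℝ) (WithLp.ofLp u) a)

/-- drop the last coordinate -/
def initE {m : ℕ} (x : Euc (m + 1)) : Euc m := WithLp.toLp 2 (Fin.init x)

lemma dist_sq_eq {n : ℕ} (x y : Euc n) :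
    dist x y ^ 2 = ∑ i, (x i - y i) ^ 2 := by
  rw [EuclideanSpace.dist_eq, Real.sq_sqrt]
  · congr 1; funext i; rw [Real.dist_eq, sq_abs]
  · exact Finset.sum_nonneg fun i _ => sq_nonneg _

lemma norm_sq_eq {n : ℕ} (x : Euc n) :
    ‖x‖ ^ 2 = ∑ i, (x i) ^ 2 := by
  have := dist_sq_eq x 0
  simpa [dist_zero_right] using this

lemma snocE_dist_sq {m : ℕ} (u v : Euc m) (a b : ℝ) :
    dist (snocE u a) (snocE v b) ^ 2 = dist u v ^ 2 + (a - b) ^ 2 := by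
  rw [dist_sq_eq, dist_sq_eq]
  rw [Fin.sum_univ_castSucc]
  congr 1
  · congr 1; funext i; simp [snocE, Fin.snoc_castSucc]
  · simp [snocE, Fin.snoc_last]

lemma snocE_norm_sq {m : ℕ} (u : Euc m) (a : ℝ) :
    ‖snocE u a‖ ^ 2 = ‖u‖ ^ 2 + a ^ 2 := by
  have h := snocE_dist_sq u 0 a 0
  have h0 : snocE (0 : Euc m) (0:ℝ) = (0 : Euc (m+1)) := by
    ext i
    refine Fin.lastCases ?_ (fun k => ?_) i <;> simp [snocE]
  rw [h0] at h
  simpa [dist_zero_right] using h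

lemma initE_snocE {m : ℕ} (u : Euc m) (a : ℝ) : initE (snocE u a) = u := by
  ext i; simp [initE, snocE, Fin.init_snoc]

lemma snocE_initE {m : ℕ} (x : Euc (m + 1)) : snocE (initE x) (x (Fin.last m)) = x := by
  ext i; simp [initE, snocE, Fin.snoc_init_self]

lemma initE_lipschitz {m : ℕ} : LipschitzWith 1 (initE (m := m)) := by
  apply LipschitzWith.of_dist_le_mul
  intro x y
  rw [NNReal.coe_one, one_mul]
  have h2 : dist (initE x) (initE y) ^ 2 ≤ dist x y ^ 2 := by
    rw [dist_sq_eq, dist_sq_eq, Fin.sum_univ_castSucc (n := m)]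
    have : ∀ i : Fin m, (initE x i - initE y i)^2 = (x i.castSucc - y i.castSucc)^2 := by
      intro i; simp [initE, Fin.init]
    rw [Finset.sum_congr rfl fun i _ => this i]
    nlinarith [sq_nonneg (x (Fin.last m) - y (Fin.last m))]
  nlinarith [dist_nonneg (x := initE x) (y := initE y), dist_nonneg (x := x) (y := y)]

lemma le_of_sq_le_sq' {a b : ℝ} (ha : 0 ≤ a) (hb : 0 ≤ b) (h : a^2 ≤ b^2) : a ≤ b := by
  nlinarith

/-- graph chart of the sphere of radius `r`, over the hyperplane of the first `m`
coordinates, on the side `s = ±1` of the last coordinate. -/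
def chart (m : ℕ) (r s : ℝ) (u : Euc m) : Euc (m + 1) :=
  snocE u (s * Real.sqrt (r^2 - ‖u‖^2))

lemma chart_mem_sphere {m : ℕ} {r s : ℝ} (hr : 0 < r) (hs : s^2 = 1)
    {u : Euc m} (hu : ‖u‖ ≤ r) : chart m r s u ∈ sphere (0 : Euc (m+1)) r := by
  have hA : 0 ≤ r^2 - ‖u‖^2 := by nlinarith [norm_nonneg u]
  have h2 : ‖chart m r s u‖^2 = r^2 := by
    rw [chart, snocE_norm_sq, mul_pow, hs, one_mul, Real.sq_sqrt hA]; ring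
  have : ‖chart m r s u‖ = r := by
    rw [← Real.sqrt_sq (norm_nonneg _), h2, Real.sqrt_sq hr.le]
  simpa [mem_sphere_iff_norm] using this

lemma sqrt_diff_sq_le {A B E : ℝ} (hE : 0 < E) (hA : E ≤ A) (hB : E ≤ B) :
    (Real.sqrt A - Real.sqrt B)^2 * (4 * E) ≤ (A - B)^2 := by
  have ha : Real.sqrt A ^ 2 = A := Real.sq_sqrt (hE.le.trans hA)
  have hb : Real.sqrt B ^ 2 = B := Real.sq_sqrt (hE.le.trans hB)
  have haE : Real.sqrt E ≤ Real.sqrt A := Real.sqrt_le_sqrt hA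
  have hbE : Real.sqrt E ≤ Real.sqrt B := Real.sqrt_le_sqrt hB
  have he : Real.sqrt E ^ 2 = E := Real.sq_sqrt hE.le
  have hEpos : 0 < Real.sqrt E := Real.sqrt_pos.mpr hE
  have key : (Real.sqrt A + Real.sqrt B)^2 - 4 * E ≥ 0 := by nlinarith
  nlinarith [mul_nonneg (sq_nonneg (Real.sqrt A - Real.sqrt B)) key]

lemma chart_lipschitz {m : ℕ} {r s R : ℝ} (hr : 0 < r) (hs : s^2 = 1)
    (hR0 : 0 ≤ R) (hRr : R < r) :
    LipschitzOnWith (Real.toNNReal (Real.sqrt (1 + r^2 / (r^2 - R^2))))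
      (chart m r s) (closedBall (0 : Euc m) R) := by
  set E : ℝ := r^2 - R^2 with hEdef
  have hE : 0 < E := by nlinarith
  set c2 : ℝ := r^2 / E with hc2def
  have hc2 : 0 ≤ c2 := by positivity
  apply LipschitzOnWith.of_dist_le_mul
  intro u hu v hv
  rw [mem_closedBall, dist_zero_right] at hu hv
  have huv : |‖u‖ - ‖v‖| ≤ dist u v := by
    rw [dist_eq_norm]; exact abs_norm_sub_norm_le u v
  set A : ℝ := r^2 - ‖u‖^2 with hAdef
  set B : ℝ := r^2 - ‖v‖^2 with hBdef
  have hA : E ≤ A := by nlinarith [norm_nonneg u]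
  have hB : E ≤ B := by nlinarith [norm_nonneg v]
  have hABd : (A - B)^2 ≤ dist u v ^2 * (4 * R^2) := by
    have h1 : A - B = (‖v‖ - ‖u‖) * (‖v‖ + ‖u‖) := by rw [hAdef, hBdef]; ring
    have h2 : |A - B| ≤ dist u v * (2 * R) := by
      rw [h1, abs_mul]
      have e1 : |‖v‖ - ‖u‖| ≤ dist u v := by rwa [abs_sub_comm] at huv
      have e2 : |‖v‖ + ‖u‖| ≤ 2 * R := by
        rw [abs_of_nonneg (by positivity)]; nlinarith
      exact mul_le_mul e1 e2 (abs_nonneg _) dist_nonneg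
    calc (A - B)^2 = |A - B|^2 := (sq_abs _).symm
      _ ≤ (dist u v * (2 * R))^2 := by
          apply pow_le_pow_left₀ (abs_nonneg _) h2
      _ = dist u v ^2 * (4 * R^2) := by ring
  have hsq : (Real.sqrt A - Real.sqrt B)^2 ≤ c2 * dist u v ^2 := by
    have h0 := sqrt_diff_sq_le hE hA hB
    have hR2r2 : R^2 ≤ r^2 := by nlinarith
    rw [hc2def, div_mul_eq_mul_div, le_div_iff₀ hE]
    nlinarith [h0, hABd, mul_le_mul_of_nonneg_left hR2r2 (sq_nonneg (dist u v))]
  have hd2 : dist (chart m r s u) (chart m r s v) ^2 ≤ (1 + c2) * dist u v ^2 := by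
    rw [chart, chart, snocE_dist_sq, ← mul_sub, mul_pow, hs, one_mul]
    nlinarith
  have hK : (0:ℝ) ≤ Real.sqrt (1 + c2) := Real.sqrt_nonneg _
  have hcoe : ((Real.toNNReal (Real.sqrt (1 + r^2/(r^2-R^2)))) : ℝ)
      = Real.sqrt (1 + c2) := Real.coe_toNNReal _ (Real.sqrt_nonneg _)
  rw [hcoe]
  apply le_of_sq_le_sq' dist_nonneg (by positivity)
  rw [mul_pow, Real.sq_sqrt (by positivity : (0:ℝ) ≤ 1 + c2)]
  exact hd2

lemma lt_of_sq_lt_sq' {a b : ℝ} (ha : 0 ≤ a) (hb : 0 ≤ b) (h : a^2 < b^2) : a < b := by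
  nlinarith

/-- coordinate permutation as a linear isometry equivalence of `ℝⁿ`. -/
def permIso (n : ℕ) (σ : Equiv.Perm (Fin n)) : Euc n ≃ₗᵢ[ℝ] Euc n :=
  LinearIsometryEquiv.piLpCongrLeft 2 ℝ ℝ σ

lemma permIso_symm_apply (n : ℕ) (σ : Equiv.Perm (Fin n)) (z : Euc n) (i : Fin n) :
    (permIso n σ).symm z i = z (σ i) := by
  rw [permIso, LinearIsometryEquiv.piLpCongrLeft_symm,
    LinearIsometryEquiv.piLpCongrLeft_apply]
  simp [Equiv.piCongrLeft'_apply]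

lemma liso_image_hausdorff {n : ℕ} (T : Euc n ≃ₗᵢ[ℝ] Euc n) (d : ℝ) (A : Set (Euc n)) :
    μH[d] (⇑T '' A) = μH[d] A :=
  T.toIsometryEquiv.hausdorffMeasure_image d A

lemma haarEuc (m : ℕ) : Measure.IsAddHaarMeasure (μH[(m:ℝ)] : Measure (Euc m)) := by
  have h : ((m:ℝ)) = ((Module.finrank ℝ (Euc m) : ℕ) : ℝ) := by
    rw [finrank_euclideanSpace_fin]
  rw [h]; infer_instance

lemma ball_meas_pos (m : ℕ) (u : Euc m) {ε : ℝ} (hε : 0 < ε) :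
    0 < μH[(m:ℝ)] (ball u ε) := by
  haveI := haarEuc m
  exact isOpen_ball.measure_pos _ (nonempty_ball.mpr hε)

lemma closedBall_meas_lt_top (m : ℕ) (R : ℝ) :
    μH[(m:ℝ)] (closedBall (0 : Euc m) R) < ⊤ := by
  haveI := haarEuc m
  exact (isCompact_closedBall _ _).measure_lt_top

lemma sphere_hausdorff_lt_top (m : ℕ) {r : ℝ} (hr : 0 < r) :
    μH[(m:ℝ)] (sphere (0 : Euc (m+1)) r) < ⊤ := by
  classical
  set R : ℝ := r * Real.sqrt (m / (m+1)) with hRdef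
  have hmr : (0:ℝ) ≤ (m:ℝ)/(m+1) := by positivity
  have hR0 : 0 ≤ R := by positivity
  have hRsq : R^2 = r^2 * ((m:ℝ)/(m+1)) := by
    rw [hRdef, mul_pow, Real.sq_sqrt hmr]
  have hm1 : (0:ℝ) < (m:ℝ)+1 := by positivity
  have hRr : R < r := by
    apply lt_of_sq_lt_sq' hR0 hr.le
    rw [hRsq]
    have h1 : (m:ℝ)/(m+1) < 1 := by rw [div_lt_one hm1]; linarith
    have hr2 : 0 < r^2 := by positivity
    nlinarith [mul_lt_mul_of_pos_left h1 hr2]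
  have cover : sphere (0 : Euc (m+1)) r ⊆
      ⋃ j : Fin (m+1), (⇑(permIso (m+1) (Equiv.swap j (Fin.last m))) ''
          (chart m r 1 '' closedBall 0 R) ∪
        ⇑(permIso (m+1) (Equiv.swap j (Fin.last m))) ''
          (chart m r (-1) '' closedBall 0 R)) := by
    intro z hz
    rw [mem_sphere_iff_norm, sub_zero] at hz
    obtain ⟨j, -, hj⟩ := Finset.exists_max_image Finset.univ (fun i => (z i)^2)
      ⟨⟨0, m.succ_pos⟩, Finset.mem_univ _⟩
    have hsum : r^2 = ∑ i, (z i)^2 := by rw [← hz, norm_sq_eq]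
    have hzj : r^2 ≤ ((m:ℝ)+1) * (z j)^2 := by
      rw [hsum]
      calc ∑ i, (z i)^2 ≤ ∑ _i : Fin (m+1), (z j)^2 :=
            Finset.sum_le_sum (fun i _ => hj i (Finset.mem_univ i))
        _ = ((m:ℝ)+1) * (z j)^2 := by
            rw [Finset.sum_const, Finset.card_univ, Fintype.card_fin, nsmul_eq_mul]
            push_cast; ring
    set T := permIso (m+1) (Equiv.swap j (Fin.last m)) with hTdef
    set y := T.symm z with hydef
    have hyi : ∀ i, y i = z ((Equiv.swap j (Fin.last m)) i) := fun i =>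
      permIso_symm_apply _ _ z i
    have hynorm : ‖y‖ = r := by rw [hydef, LinearIsometryEquiv.norm_map]; exact hz
    set a := y (Fin.last m) with hadef
    have ha : a = z j := by rw [hadef, hyi, Equiv.swap_apply_right]
    set u := initE y with hudef
    have hysnoc : snocE u a = y := snocE_initE y
    have hunorm : ‖u‖^2 = r^2 - a^2 := by
      have := snocE_norm_sq u a
      rw [hysnoc, hynorm] at this
      linarith
    have huR : u ∈ closedBall (0 : Euc m) R := by
      rw [mem_closedBall, dist_zero_right]
      apply le_of_sq_le_sq' (norm_nonneg u) hR0
      rw [hunorm, hRsq, ha, ← mul_div_assoc, le_div_iff₀ hm1]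
      nlinarith [hzj]
    have hsqrt : Real.sqrt (r^2 - ‖u‖^2) = |a| := by
      rw [hunorm]
      have : r^2 - (r^2 - a^2) = a^2 := by ring
      rw [this, Real.sqrt_sq_eq_abs]
    have hz_eq : z = T y := (T.apply_symm_apply z).symm
    apply Set.mem_iUnion.mpr
    refine ⟨j, ?_⟩
    by_cases h0 : 0 ≤ a
    · left
      refine ⟨y, ⟨u, huR, ?_⟩, hz_eq.symm⟩
      rw [chart, hsqrt, one_mul, abs_of_nonneg h0, hysnoc]
    · right
      refine ⟨y, ⟨u, huR, ?_⟩, hz_eq.symm⟩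
      rw [chart, hsqrt, abs_of_neg (lt_of_not_ge h0)]
      rw [show -1 * -a = a by ring, hysnoc]
  refine lt_of_le_of_lt (measure_mono cover) ?_
  refine lt_of_le_of_lt (measure_iUnion_le _) ?_
  rw [tsum_fintype]
  refine ENNReal.sum_lt_top.mpr (fun j _ => ?_)
  have hpiece : ∀ s : ℝ, s^2 = 1 →
      μH[(m:ℝ)] (⇑(permIso (m+1) (Equiv.swap j (Fin.last m))) ''
        (chart m r s '' closedBall 0 R)) < ⊤ := by
    intro s hs
    rw [liso_image_hausdorff]
    refine lt_of_le_of_lt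
      ((chart_lipschitz hr hs hR0 hRr).hausdorffMeasure_image_le
        (show (0:ℝ) ≤ (m:ℝ) by positivity)) ?_
    exact ENNReal.mul_lt_top
      (ENNReal.rpow_lt_top_of_nonneg (by positivity) ENNReal.coe_ne_top)
      (closedBall_meas_lt_top m R)
  refine lt_of_le_of_lt (measure_union_le _ _) ?_
  exact ENNReal.add_lt_top.mpr ⟨hpiece 1 (by norm_num), hpiece (-1) (by norm_num)⟩

lemma sphere_inter_open_pos (m : ℕ) {r : ℝ} (hr : 0 < r) {V : Set (Euc (m+1))}
    (hV : IsOpen V) {z₀ : Euc (m+1)} (hz₀V : z₀ ∈ V) (hz₀ : ‖z₀‖ = r) :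
    0 < μH[(m:ℝ)] (V ∩ sphere (0 : Euc (m+1)) r) := by
  classical
  -- find a coordinate where z₀ is nonzero
  have hex : ∃ j, z₀ j ≠ 0 := by
    by_contra h
    push_neg at h
    have : ‖z₀‖^2 = 0 := by
      rw [norm_sq_eq]; exact Finset.sum_eq_zero (fun i _ => by rw [h i]; ring)
    rw [hz₀] at this; nlinarith
  obtain ⟨j, hj⟩ := hex
  set T := permIso (m+1) (Equiv.swap j (Fin.last m)) with hTdef
  set y₀ := T.symm z₀ with hy₀def
  set V' := ⇑T.symm '' V with hV'def
  have hV'open : IsOpen V' := T.symm.toIsometryEquiv.toHomeomorph.isOpenMap V hV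
  have hTsphere : ⇑T.symm '' sphere (0 : Euc (m+1)) r = sphere (0 : Euc (m+1)) r := by
    have := T.symm.toIsometryEquiv.image_sphere 0 r
    simpa using this
  have hinj : Function.Injective (⇑T.symm) := T.symm.injective
  have himage : ⇑T.symm '' (V ∩ sphere (0 : Euc (m+1)) r) = V' ∩ sphere (0 : Euc (m+1)) r := by
    rw [Set.image_inter hinj, hTsphere, hV'def]
  have hmeas : μH[(m:ℝ)] (V ∩ sphere (0 : Euc (m+1)) r)
      = μH[(m:ℝ)] (V' ∩ sphere (0 : Euc (m+1)) r) := by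
    rw [← himage, liso_image_hausdorff]
  rw [hmeas]
  -- now work with y₀ whose last coordinate is nonzero
  have hyi : ∀ i, y₀ i = z₀ ((Equiv.swap j (Fin.last m)) i) := fun i =>
    permIso_symm_apply _ _ z₀ i
  set a := y₀ (Fin.last m) with hadef
  have ha : a = z₀ j := by rw [hadef, hyi, Equiv.swap_apply_right]
  have hanz : a ≠ 0 := ha ▸ hj
  have hynorm : ‖y₀‖ = r := by rw [hy₀def, LinearIsometryEquiv.norm_map]; exact hz₀
  have hy₀V' : y₀ ∈ V' := ⟨z₀, hz₀V, rfl⟩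
  set u₀ := initE y₀ with hu₀def
  have hysnoc : snocE u₀ a = y₀ := snocE_initE y₀
  have hunorm : ‖u₀‖^2 = r^2 - a^2 := by
    have := snocE_norm_sq u₀ a
    rw [hysnoc, hynorm] at this; linarith
  have hu₀r : ‖u₀‖ < r := by
    apply lt_of_sq_lt_sq' (norm_nonneg _) hr.le
    have : 0 < a^2 := by positivity
    rw [hunorm]; linarith
  set R : ℝ := (‖u₀‖ + r)/2 with hRdef
  have hR0 : 0 ≤ R := by positivity
  have hu₀R : ‖u₀‖ < R := by rw [hRdef]; linarith
  have hRr : R < r := by rw [hRdef]; linarith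
  set s : ℝ := if 0 ≤ a then 1 else -1 with hsdef
  have hs : s^2 = 1 := by rw [hsdef]; split <;> norm_num
  have hchart0 : chart m r s u₀ = y₀ := by
    have hsqrt : Real.sqrt (r^2 - ‖u₀‖^2) = |a| := by
      rw [hunorm, show r^2 - (r^2 - a^2) = a^2 by ring, Real.sqrt_sq_eq_abs]
    rw [chart, hsqrt, hsdef]
    split
    · rw [one_mul, abs_of_nonneg ‹_›, hysnoc]
    · rw [abs_of_neg (lt_of_not_ge ‹_›), show -1 * -a = a by ring, hysnoc]
  -- continuity of the chart at u₀
  have hcont : ContinuousOn (chart m r s) (closedBall (0 : Euc m) R) :=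
    (chart_lipschitz hr hs hR0 hRr).continuousOn
  have hmemball : u₀ ∈ ball (0 : Euc m) R := by
    rw [mem_ball, dist_zero_right]; exact hu₀R
  have hnhds : closedBall (0 : Euc m) R ∈ nhds u₀ :=
    Filter.mem_of_superset (isOpen_ball.mem_nhds hmemball) ball_subset_closedBall
  have hCA : ContinuousAt (chart m r s) u₀ := hcont.continuousAt hnhds
  have hpre : (chart m r s)⁻¹' V' ∈ nhds u₀ :=
    hCA.preimage_mem_nhds (hV'open.mem_nhds (hchart0 ▸ hy₀V'))
  obtain ⟨ε, hε, hball⟩ := Metric.mem_nhds_iff.mp hpre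
  set ε' : ℝ := min ε (R - ‖u₀‖) with hε'def
  have hε' : 0 < ε' := lt_min hε (by linarith)
  set B := ball u₀ ε' with hBdef
  have hBsub1 : B ⊆ (chart m r s)⁻¹' V' :=
    Set.Subset.trans (Metric.ball_subset_ball (min_le_left _ _)) hball
  have hBsub2 : B ⊆ closedBall (0 : Euc m) R := by
    intro x hx
    rw [hBdef, mem_ball] at hx
    rw [mem_closedBall, dist_zero_right]
    have h1 : dist x u₀ < R - ‖u₀‖ := lt_of_lt_of_le hx (min_le_right _ _)
    rw [dist_eq_norm] at h1
    have h2 := norm_sub_norm_le x u₀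
    linarith
  have hBsub : chart m r s '' B ⊆ V' ∩ sphere (0 : Euc (m+1)) r := by
    rintro _ ⟨x, hx, rfl⟩
    refine ⟨hBsub1 hx, chart_mem_sphere hr hs ?_⟩
    have := hBsub2 hx
    rw [mem_closedBall, dist_zero_right] at this
    linarith
  have hproj : initE '' (chart m r s '' B) = B := by
    rw [Set.image_image]
    have : ∀ x, initE (chart m r s x) = x := fun x => initE_snocE _ _
    simp only [this, Set.image_id']
  have hBpos : 0 < μH[(m:ℝ)] B := ball_meas_pos m u₀ hε'
  have hchain : μH[(m:ℝ)] B ≤ μH[(m:ℝ)] (chart m r s '' B) := by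
    conv_lhs => rw [← hproj]
    refine le_trans (initE_lipschitz.hausdorffMeasure_image_le
      (show (0:ℝ) ≤ (m:ℝ) by positivity) _) ?_
    simp [ENNReal.one_rpow]
  exact lt_of_lt_of_le hBpos (le_trans hchain (measure_mono hBsub))

lemma sphAvg_eq_zero_on_sphere {n : ℕ} (hn : n ≠ 0) {r : ℝ} (hr : 0 < r)
    {f : Euc n → ℝ} (hf : Continuous f) (hnn : ∀ z ∈ sphere (0:Euc n) r, 0 ≤ f z)
    (havg : sphAvg n r f = 0) : ∀ z ∈ sphere (0 : Euc n) r, f z = 0 := by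
  obtain ⟨m, rfl⟩ : ∃ m, n = m + 1 :=
    ⟨n-1, (Nat.succ_pred_eq_of_pos (Nat.pos_of_ne_zero hn)).symm⟩
  rw [sphAvg, if_neg hr.ne'] at havg
  have hcast : ((m+1 : ℕ) : ℝ) - 1 = (m:ℝ) := by push_cast; ring
  rw [hcast] at havg
  set μ : Measure (Euc (m+1)) := μH[(m:ℝ)] with hμdef
  set S := sphere (0 : Euc (m+1)) r with hSdef
  have hfin : μ S < ⊤ := sphere_hausdorff_lt_top m hr
  have hz₀n : ‖(EuclideanSpace.single (0 : Fin (m+1)) r : Euc (m+1))‖ = r := by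
    simp [EuclideanSpace.norm_single, Real.norm_eq_abs, abs_of_pos hr]
  have hpos : 0 < μ S := by
    have := sphere_inter_open_pos m hr isOpen_univ (Set.mem_univ _) hz₀n
    simpa using this
  have hS : MeasurableSet S := isClosed_sphere.measurableSet
  obtain ⟨C, hC⟩ := (isCompact_sphere (0 : Euc (m+1)) r).exists_bound_of_continuousOn
    hf.continuousOn
  have hint : IntegrableOn f S μ := by
    apply Measure.integrableOn_of_bounded hfin.ne hf.aestronglyMeasurable
    exact (ae_restrict_mem hS).mono (fun z hz => hC z hz)
  have h1 : ∫ z in S, f z ∂μ = 0 := by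
    rw [setAverage_eq, smul_eq_mul] at havg
    have hne : (μ S).toReal ≠ 0 := (ENNReal.toReal_pos hpos.ne' hfin.ne).ne'
    rcases mul_eq_zero.mp havg with h | h
    · exact absurd h (inv_ne_zero hne)
    · exact h
  have hae : 0 ≤ᵐ[μ.restrict S] f := (ae_restrict_mem hS).mono hnn
  have h2 : f =ᵐ[μ.restrict S] 0 := (setIntegral_eq_zero_iff_of_nonneg_ae hae hint).mp h1
  intro z hz
  by_contra hne0
  have hfz : 0 < f z := lt_of_le_of_ne (hnn z hz) (Ne.symm hne0)
  have hzn : ‖z‖ = r := by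
    rw [hSdef] at hz
    exact mem_sphere_zero_iff_norm.mp hz
  set V : Set (Euc (m+1)) := f⁻¹' (Set.Ioi (f z / 2)) with hVdef
  have hVopen : IsOpen V := isOpen_Ioi.preimage hf
  have hzV : z ∈ V := by
    simp only [hVdef, Set.mem_preimage, Set.mem_Ioi]; linarith
  have hposV : 0 < μ (V ∩ S) := sphere_inter_open_pos m hr hVopen hzV hzn
  have h2' : ∀ᵐ x ∂μ.restrict S, f x = 0 := by
    filter_upwards [h2] with x hx using hx
  have h3 := ae_iff.mp h2'
  have hmeasne : MeasurableSet {a : Euc (m+1) | ¬ f a = 0} := by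
    have h4 : {a : Euc (m+1) | ¬ f a = 0} = (f⁻¹' {0})ᶜ := by ext x; simp
    rw [h4]; exact (hf.measurable (measurableSet_singleton 0)).compl
  rw [Measure.restrict_apply hmeasne] at h3
  have hzero : μ ({a : Euc (m+1) | ¬ f a = 0} ∩ S) = 0 := h3
  have hsub : V ∩ S ⊆ {a : Euc (m+1) | ¬ f a = 0} ∩ S := by
    rintro x ⟨hxV, hxS⟩
    refine ⟨?_, hxS⟩
    simp only [hVdef, Set.mem_preimage, Set.mem_Ioi] at hxV
    simp only [Set.mem_setOf_eq]
    intro h; rw [h] at hxV; linarith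
  have hmono := measure_mono (μ := μ) hsub
  rw [hzero] at hmono
  exact absurd (le_antisymm hmono zero_le) hposV.ne'

lemma evalPt_mul {n : ℕ} (x : Euc n) (p q : MvPolynomial (Fin n) ℝ) :
    evalPt x (p * q) = evalPt x p * evalPt x q := by simp [evalPt]

lemma evalPt_continuous {n : ℕ} (p : MvPolynomial (Fin n) ℝ) :
    Continuous (fun x : Euc n => evalPt x p) := by
  have h1 : Continuous (fun x : Euc n => (fun i => x i : Fin n → ℝ)) :=
    PiLp.continuous_ofLp 2 (fun _ : Fin n => ℝ)
  exact (MvPolynomial.continuous_eval p).comp h1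

lemma euc_sum_apply {n : ℕ} {ι : Type*} (s : Finset ι) (f : ι → Euc n) (i : Fin n) :
    (∑ j ∈ s, f j) i = ∑ j ∈ s, f j i := by
  classical
  induction s using Finset.cons_induction with
  | empty => rfl
  | cons a s ha ih => rw [Finset.sum_cons, Finset.sum_cons, ← ih]; rfl

lemma euc_sum_single {n : ℕ} (z : Euc n) :
    ∑ j, z j • ((WithLp.equiv 2 (Fin n → ℝ)).symm (Pi.single j 1) : Euc n) = z := by
  have h := (PiLp.basisFun 2 ℝ (Fin n)).sum_repr z
  simpa [PiLp.basisFun_apply, PiLp.basisFun_repr] using h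

lemma liso_apply_eq_sum {n : ℕ} (T : Euc n ≃ₗᵢ[ℝ] Euc n) (z : Euc n) (i : Fin n) :
    T z i = ∑ j, (T ((WithLp.equiv 2 (Fin n → ℝ)).symm (Pi.single j 1))) i * z j := by
  conv_lhs => rw [← euc_sum_single z]
  rw [map_sum, euc_sum_apply]
  congr 1
  funext j
  rw [T.map_smul]
  show z j * (T ((WithLp.equiv 2 (Fin n → ℝ)).symm (Pi.single j 1))) i = _
  exact mul_comm _ _

lemma aeval_eq_eval' {n : ℕ} (g : Fin n → ℝ) (q : MvPolynomial (Fin n) ℝ) :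
    MvPolynomial.aeval g q = MvPolynomial.eval g q := by
  rw [← MvPolynomial.coe_aeval_eq_eval]; rfl

lemma totalDegree_bind₁_le {n : ℕ} (f : Fin n → MvPolynomial (Fin n) ℝ)
    (hf : ∀ i, (f i).totalDegree ≤ 1) (p : MvPolynomial (Fin n) ℝ) :
    (MvPolynomial.bind₁ f p).totalDegree ≤ p.totalDegree := by
  classical
  conv_lhs => rw [p.as_sum]
  rw [map_sum]
  apply (MvPolynomial.totalDegree_finset_sum _ _).trans
  apply Finset.sup_le
  intro d hd
  rw [MvPolynomial.bind₁_monomial]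
  apply (MvPolynomial.totalDegree_mul _ _).trans
  rw [MvPolynomial.totalDegree_C, zero_add]
  refine le_trans (MvPolynomial.totalDegree_finset_prod _ _) ?_
  refine le_trans ?_ (MvPolynomial.le_totalDegree hd)
  have hb : ∀ i ∈ d.support, (f i ^ d i).totalDegree ≤ d i := by
    intro i _
    refine le_trans (MvPolynomial.totalDegree_pow _ _) ?_
    calc d i * (f i).totalDegree ≤ d i * 1 := Nat.mul_le_mul_left _ (hf i)
      _ = d i := Nat.mul_one _
  exact le_trans (Finset.sum_le_sum hb) (le_of_eq rfl)

lemma exists_comp_poly {n : ℕ} (T : Euc n ≃ₗᵢ[ℝ] Euc n) (p : MvPolynomial (Fin n) ℝ) :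
    ∃ q : MvPolynomial (Fin n) ℝ, q.totalDegree ≤ p.totalDegree ∧
      ∀ z : Euc n, evalPt z q = evalPt (T z) p := by
  classical
  set lin : Fin n → MvPolynomial (Fin n) ℝ := fun i =>
    ∑ j, MvPolynomial.C ((T ((WithLp.equiv 2 (Fin n → ℝ)).symm (Pi.single j 1))) i) *
      MvPolynomial.X j with hlin
  have hdeg : ∀ i, (lin i).totalDegree ≤ 1 := by
    intro i
    apply (MvPolynomial.totalDegree_finset_sum _ _).trans
    apply Finset.sup_le
    intro j _
    refine le_trans (MvPolynomial.totalDegree_mul _ _) ?_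
    rw [MvPolynomial.totalDegree_C, zero_add]
    exact le_of_eq (MvPolynomial.totalDegree_X _)
  refine ⟨MvPolynomial.bind₁ lin p, totalDegree_bind₁_le lin hdeg p, ?_⟩
  intro z
  have hcoord : (fun i => MvPolynomial.aeval (fun k : Fin n => z k) (lin i))
      = (fun i => (T z) i) := by
    funext i
    rw [aeval_eq_eval', hlin]
    simp only [map_sum, map_mul, MvPolynomial.eval_C, MvPolynomial.eval_X]
    exact (liso_apply_eq_sum T z i).symm
  rw [evalPt, evalPt, ← aeval_eq_eval', MvPolynomial.aeval_bind₁, hcoord, aeval_eq_eval']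

lemma sphAvg_comp_liso (n : ℕ) (r : ℝ) (T : Euc n ≃ₗᵢ[ℝ] Euc n) (F : Euc n → ℝ) :
    sphAvg n r (fun z => F (T z)) = sphAvg n r F := by
  rw [sphAvg, sphAvg]
  by_cases h : r = 0
  · rw [if_pos h, if_pos h, map_zero]
  · rw [if_neg h, if_neg h]
    have hmp : MeasurePreserving (⇑T) (μH[(n:ℝ)-1]) (μH[(n:ℝ)-1]) := by
      have := T.toIsometryEquiv.measurePreserving_hausdorffMeasure (X := Euc n) ((n:ℝ)-1)
      simpa using this
    have hemb : MeasurableEmbedding (⇑T) := by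
      have := T.toIsometryEquiv.toHomeomorph.measurableEmbedding
      simpa using this
    have himg : ⇑T '' sphere (0:Euc n) r = sphere (0:Euc n) r := by
      have := T.toIsometryEquiv.image_sphere 0 r
      simpa using this
    have h1 : ∫ y in sphere (0:Euc n) r, F y ∂μH[(n:ℝ)-1]
        = ∫ z in sphere (0:Euc n) r, F (T z) ∂μH[(n:ℝ)-1] := by
      conv_lhs => rw [← himg]
      exact hmp.setIntegral_image_emb hemb F _
    rw [setAverage_eq, setAverage_eq, h1]

lemma sphAvg_nonneg {n : ℕ} {r : ℝ} {f : Euc n → ℝ} (hf : ∀ z, 0 ≤ f z) :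
    0 ≤ sphAvg n r f := by
  rw [sphAvg]; split
  · exact hf 0
  · rw [setAverage_eq, smul_eq_mul]
    exact mul_nonneg (inv_nonneg.mpr ENNReal.toReal_nonneg) (integral_nonneg fun z => hf z)

set_option maxHeartbeats 2000000 in
/-- If `(X, w)` is a tight Euclidean `2e`-design on its concentric spheres,
then the weight `w` is constant on each layer `Xᵢ = X ∩ Sᵢ`. -/
theorem weight_constant_on_layers_of_tight (n e : ℕ)
    (X : Finset (Euc n)) (w : Euc n → ℝ)
    (hne : X.Nonempty) (hw : ∀ x ∈ X, 0 < w x)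
    (ht : IsTightOnS n e X w) :
    ∀ x ∈ X, ∀ y ∈ X, ‖x‖ = ‖y‖ → w x = w y := by
  classical
  obtain ⟨hdes, hcard⟩ := ht
  set S := suppSpheres n X with hSdef
  have hXS : ∀ x ∈ X, x ∈ S := by
    intro x hx
    rw [hSdef, suppSpheres]
    exact Set.mem_iUnion₂.mpr ⟨‖x‖, Finset.mem_image_of_mem _ hx, by
      simp [mem_sphere_iff_norm]⟩
  -- the design identity applied to squares of polynomials of degree at most e
  have hQ : ∀ p : MvPolynomial (Fin n) ℝ, p.totalDegree ≤ e →
      ∑ r ∈ X.image (fun x => ‖x‖),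
        (∑ x ∈ X.filter (fun x => ‖x‖ = r), w x) * sphAvg n r (fun y => (evalPt y p)^2)
      = ∑ x ∈ X, w x * (evalPt x p)^2 := by
    intro p hp
    have hd2 : (p*p).totalDegree ≤ 2*e :=
      le_trans (MvPolynomial.totalDegree_mul p p) (by omega)
    have hmain := hdes (p*p) hd2
    have hfun : ∀ y : Euc n, evalPt y (p*p) = (evalPt y p)^2 := fun y => by
      rw [evalPt_mul]; ring
    simp only [hfun] at hmain
    exact hmain
  -- layer masses are positive
  have hc : ∀ r ∈ X.image (fun x => ‖x‖),
      0 < ∑ x ∈ X.filter (fun x => ‖x‖ = r), w x := by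
    intro r hr
    obtain ⟨x, hxX, hxr⟩ := Finset.mem_image.mp hr
    exact Finset.sum_pos (fun y hy => hw y (Finset.mem_of_mem_filter _ hy))
      ⟨x, Finset.mem_filter.mpr ⟨hxX, hxr⟩⟩
  -- a polynomial of degree ≤ e vanishing on X vanishes on all of S
  have hvanish : ∀ p : MvPolynomial (Fin n) ℝ, p.totalDegree ≤ e →
      (∀ x ∈ X, evalPt x p = 0) → ∀ z ∈ S, evalPt z p = 0 := by
    intro p hp h0
    have hrhs : ∑ x ∈ X, w x * (evalPt x p)^2 = 0 :=
      Finset.sum_eq_zero fun x hx => by rw [h0 x hx]; ring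
    have hsum := (hQ p hp).trans hrhs
    have hterm : ∀ r ∈ X.image (fun x => ‖x‖),
        0 ≤ (∑ x ∈ X.filter (fun x => ‖x‖ = r), w x) *
          sphAvg n r (fun y => (evalPt y p)^2) :=
      fun r hr => mul_nonneg (hc r hr).le (sphAvg_nonneg fun z => sq_nonneg _)
    have hzero := (Finset.sum_eq_zero_iff_of_nonneg hterm).mp hsum
    intro z hz
    rw [hSdef, suppSpheres] at hz
    obtain ⟨r, hrmem, hzr⟩ := Set.mem_iUnion₂.mp hz
    have havg : sphAvg n r (fun y => (evalPt y p)^2) = 0 := by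
      rcases mul_eq_zero.mp (hzero r hrmem) with h | h
      · exact absurd h (hc r hrmem).ne'
      · exact h
    by_cases hr0 : r = 0
    · subst hr0
      rw [sphAvg, if_pos rfl] at havg
      have hz0 : z = 0 := by
        have := mem_sphere_zero_iff_norm.mp hzr
        exact norm_eq_zero.mp this
      rw [hz0]
      exact pow_eq_zero_iff two_ne_zero |>.mp havg
    · have hrpos : 0 < r := by
        obtain ⟨x, hxX, hxr⟩ := Finset.mem_image.mp hrmem
        have h1 := norm_nonneg x
        rw [hxr] at h1
        exact lt_of_le_of_ne h1 (Ne.symm hr0)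
      have hn0 : n ≠ 0 := by
        intro hn; subst hn
        obtain ⟨x, hxX, hxr⟩ := Finset.mem_image.mp hrmem
        have hx0 : x = 0 := by ext i; exact Fin.elim0 i
        rw [hx0, norm_zero] at hxr
        exact hr0 hxr.symm
      have hvan := sphAvg_eq_zero_on_sphere hn0 hrpos
        ((evalPt_continuous p).pow 2) (fun u _ => sq_nonneg _) havg z hzr
      exact pow_eq_zero_iff two_ne_zero |>.mp hvan
  -- the restriction map to X, from Pol_e(S)
  let res : (S → ℝ) →ₗ[ℝ] ({x // x ∈ X} → ℝ) :=
    { toFun := fun f z => f ⟨z.1, hXS z.1 z.2⟩,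
      map_add' := fun f g => rfl,
      map_smul' := fun c f => rfl }
  let L : PolOn n e S →ₗ[ℝ] ({x // x ∈ X} → ℝ) := res.comp (PolOn n e S).subtype
  have hLinj : Function.Injective L := by
    rw [← LinearMap.ker_eq_bot]
    apply (Submodule.eq_bot_iff _).mpr
    rintro ⟨f, hf⟩ hker
    obtain ⟨p, hp, hpf⟩ := hf
    have hpe : p.totalDegree ≤ e := (MvPolynomial.mem_restrictTotalDegree _ _ _).mp hp
    have hX0 : ∀ x ∈ X, evalPt x p = 0 := by
      intro x hx
      have h1 := congrFun (show L ⟨f, ⟨p, hp, hpf⟩⟩ = 0 from hker) ⟨x, hx⟩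
      have h3 : f ⟨x, hXS x hx⟩ = 0 := h1
      have h4 : evalPt x p = f ⟨x, hXS x hx⟩ := by rw [← hpf]; rfl
      rw [h4]; exact h3
    have hS0 : ∀ z ∈ S, evalPt z p = 0 := hvanish p hpe hX0
    have : f = 0 := by
      rw [← hpf]
      funext z
      exact hS0 z.1 z.2
    exact Subtype.ext this
  haveI hfdX : FiniteDimensional ℝ ({x // x ∈ X} → ℝ) := inferInstance
  haveI hfdV : FiniteDimensional ℝ (PolOn n e S) := FiniteDimensional.of_injective L hLinj
  have hrankX : Module.finrank ℝ ({x // x ∈ X} → ℝ) = X.card := by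
    rw [Module.finrank_fintype_fun_eq_card, Fintype.card_coe]
  have hsurj : Function.Surjective L := by
    have h1 := LinearMap.finrank_range_add_finrank_ker L
    rw [LinearMap.ker_eq_bot.mpr hLinj, finrank_bot, add_zero] at h1
    have h2 : Module.finrank ℝ (LinearMap.range L)
        = Module.finrank ℝ ({x // x ∈ X} → ℝ) := by
      rw [h1, hrankX]
      rw [hcard]
      rfl
    rw [← LinearMap.range_eq_top]
    exact Submodule.eq_top_of_finrank_eq h2
  -- delta polynomials
  have hdelta : ∀ x ∈ X, ∃ p : MvPolynomial (Fin n) ℝ, p.totalDegree ≤ e ∧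
      ∀ z ∈ X, evalPt z p = (if z = x then (1:ℝ) else 0) := by
    intro x hx
    obtain ⟨f, hf⟩ := hsurj (fun z : {x // x ∈ X} => if (z : Euc n) = x then (1:ℝ) else 0)
    obtain ⟨p, hp, hpf⟩ := f.2
    refine ⟨p, (MvPolynomial.mem_restrictTotalDegree _ _ _).mp hp, ?_⟩
    intro z hz
    have h1 := congrFun hf ⟨z, hz⟩
    have h2 : L f ⟨z, hz⟩ = evalPt z p := by
      show (f : S → ℝ) ⟨z, hXS z hz⟩ = evalPt z p
      rw [← hpf]
      rfl
    rw [h2] at h1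
    exact h1
  -- the key inequality
  have key : ∀ x ∈ X, ∀ y ∈ X, ‖x‖ = ‖y‖ → w x ≤ w y := by
    intro x hx y hy hxy
    obtain ⟨p, hpe, hpd⟩ := hdelta y hy
    set T : Euc n ≃ₗᵢ[ℝ] Euc n := Submodule.reflection (ℝ ∙ (x - y))ᗮ with hTdef
    have hTx : T x = y := Submodule.reflection_sub hxy
    obtain ⟨q, hqe, hq⟩ := exists_comp_poly T p
    have hQp := hQ p hpe
    have hQq := hQ q (hqe.trans hpe)
    have hLHS : ∑ r ∈ X.image (fun x => ‖x‖),
        (∑ x ∈ X.filter (fun x => ‖x‖ = r), w x) * sphAvg n r (fun z => (evalPt z q)^2)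
        = ∑ r ∈ X.image (fun x => ‖x‖),
        (∑ x ∈ X.filter (fun x => ‖x‖ = r), w x) * sphAvg n r (fun z => (evalPt z p)^2) := by
      apply Finset.sum_congr rfl
      intro r hr
      congr 1
      have hfq : (fun z => (evalPt z q)^2) = (fun z : Euc n => ((evalPt (T z) p))^2) := by
        funext z; rw [hq]
      rw [hfq]
      exact sphAvg_comp_liso n r T (fun z => (evalPt z p)^2)
    have hRp : ∑ z ∈ X, w z * (evalPt z p)^2 = w y := by
      rw [Finset.sum_eq_single y]
      · rw [hpd y hy, if_pos rfl]; ring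
      · intro b hb hne; rw [hpd b hb, if_neg hne]; ring
      · intro h; exact absurd hy h
    have hRq : w x ≤ ∑ z ∈ X, w z * (evalPt z q)^2 := by
      have hterm : w x * (evalPt x q)^2 = w x := by
        rw [hq x, hTx, hpd y hy, if_pos rfl]; ring
      calc w x = w x * (evalPt x q)^2 := hterm.symm
        _ ≤ ∑ z ∈ X, w z * (evalPt z q)^2 :=
          Finset.single_le_sum (f := fun z => w z * (evalPt z q)^2)
            (fun z hz => mul_nonneg (hw z hz).le (sq_nonneg _)) hx
    have hfinal : ∑ z ∈ X, w z * (evalPt z q)^2 = w y := by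
      rw [← hQq, hLHS, hQp, hRp]
    linarith [hRq]
  intro x hx y hy hxy
  exact le_antisymm (key x hx y hy hxy) (key y hy x hx hxy.symm)

end
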